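/- Let G be a maximal outerplane graph on Fin n and let R ⊆ Fin n have even cardinality. Then there exists a simple graph H on Fin n, edge-disjoint from G, whose edges are pairwise non-crossing chords, such that the number of vertices v at which the parity condition fails (that is, v ∈ R but v has even degree in H, or v ∉ R but v has odd degree in H) is at most two. -/

import Mathlib

/-- `x` lies strictly inside the open clockwise arc from `a` to `b` on the convex
`n`-gon whose vertices are `Fin n` in clockwise cyclic order. -/
def InArc (n : ℕ) (a b x : Fin n) : Prop :=
  0 < (x - a).val ∧ (x - a).val < (b - a).val

/-- Two chords of the convex `n`-gon cross: their four endpoints are distinct and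
interleave in the cyclic order, i.e. one endpoint of the second chord lies strictly
inside each of the two open arcs determined by the first chord. -/
def Cross (n : ℕ) (e f : Sym2 (Fin n)) : Prop :=
  ∃ a b c d : Fin n, e = s(a, b) ∧ f = s(c, d) ∧ InArc n a b c ∧ InArc n b a d

/-- A boundary edge of the convex `n`-gon: a chord of the form `{i, i+1 (mod n)}`. -/
def IsBoundaryEdge (n : ℕ) (e : Sym2 (Fin n)) : Prop :=
  ∃ i j : Fin n, e = s(i, j) ∧ (j - i).val = 1

/-- A diagonal of the convex `n`-gon: a chord (pair of distinct vertices) that is not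
a boundary edge. -/
def IsDiagonal (n : ℕ) (e : Sym2 (Fin n)) : Prop :=
  ¬ e.IsDiag ∧ ¬ IsBoundaryEdge n e

/-- A maximal outerplane graph (MOP) on `Fin n` (`n ≥ 3`): a simple graph whose edge
set consists of all `n` boundary edges together with `n - 3` pairwise non-crossing
diagonals. -/
def IsMOP (n : ℕ) (G : SimpleGraph (Fin n)) : Prop :=
  3 ≤ n ∧
  (∀ e, IsBoundaryEdge n e → e ∈ G.edgeSet) ∧
  (∀ e ∈ G.edgeSet, IsBoundaryEdge n e ∨ IsDiagonal n e) ∧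
  (∀ e ∈ G.edgeSet, ∀ f ∈ G.edgeSet, ¬ Cross n e f) ∧
  {e ∈ G.edgeSet | IsDiagonal n e}.ncard = n - 3

/-! ### Auxiliary lemmas -/

private lemma fin_sub_val_of_le {n : ℕ} (a b : Fin n) (h : b.val ≤ a.val) :
    (a - b).val = a.val - b.val := by
  have ha := a.2
  have hb := b.2
  rw [Fin.sub_def]
  show (n - b.val + a.val) % n = a.val - b.val
  have h1 : n - b.val + a.val = n + (a.val - b.val) := by omega
  rw [h1, Nat.add_mod_left, Nat.mod_eq_of_lt (by omega)]

private lemma fin_sub_val_of_lt {n : ℕ} (a b : Fin n) (h : a.val < b.val) :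
    (a - b).val = n + a.val - b.val := by
  have ha := a.2
  have hb := b.2
  rw [Fin.sub_def]
  show (n - b.val + a.val) % n = n + a.val - b.val
  rw [Nat.mod_eq_of_lt (by omega)]
  omega

/-- Two chords sharing an endpoint never cross. -/
private lemma not_cross_of_mem {n : ℕ} (c : Fin n) (e f : Sym2 (Fin n))
    (he : c ∈ e) (hf : c ∈ f) : ¬ Cross n e f := by
  haveI : NeZero n := ⟨Nat.pos_iff_ne_zero.mp c.pos⟩
  rintro ⟨a, b, x, y, rfl, rfl, hx, hy⟩
  have hxa : x ≠ a := by
    rintro rfl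
    have := hx.1
    rw [sub_self] at this
    simp at this
  have hxb : x ≠ b := by
    rintro rfl; exact absurd hx.2 (lt_irrefl _)
  have hya : y ≠ a := by
    rintro rfl; exact absurd hy.2 (lt_irrefl _)
  have hyb : y ≠ b := by
    rintro rfl
    have := hy.1
    rw [sub_self] at this
    simp at this
  rw [Sym2.mem_iff] at he hf
  rcases he with rfl | rfl <;> rcases hf with h | h <;> simp_all

open Fin.CommRing in
/-- In a non-crossing graph on the convex `n`-gon there is a vertex with at most
two neighbours. -/
private lemma exists_two_nbrs (n : ℕ) (hn : 3 ≤ n) (G : SimpleGraph (Fin n))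
    (hnc : ∀ e ∈ G.edgeSet, ∀ f ∈ G.edgeSet, ¬ Cross n e f) :
    ∃ c a b : Fin n, ∀ w, G.Adj c w → w = a ∨ w = b := by
  classical
  haveI : NeZero n := ⟨by omega⟩
  have hone : (1 : Fin n).val = 1 := by
    rw [Fin.val_one']
    exact Nat.mod_eq_of_lt (by omega)
  by_cases hE : ∃ p : Fin n × Fin n, G.Adj p.1 p.2 ∧ 2 ≤ (p.2 - p.1).val
  · obtain ⟨p0, hp0⟩ := hE
    obtain ⟨⟨x, y⟩, hxy, hmin⟩ :=
      Finset.exists_min_image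
        (Finset.univ.filter fun p : Fin n × Fin n => G.Adj p.1 p.2 ∧ 2 ≤ (p.2 - p.1).val)
        (fun p => (p.2 - p.1).val) ⟨p0, by simpa using hp0⟩
    simp only [Finset.mem_filter, Finset.mem_univ, true_and] at hxy
    obtain ⟨hadj, hg2⟩ := hxy
    set g : ℕ := (y - x).val with hg
    have hgn : g ≤ n - 1 := by
      have := (y - x).2; omega
    refine ⟨x + 1, x, x + 2, ?_⟩
    intro w hw
    have hwx : w ≠ x + 1 := fun h => by subst h; exact G.loopless.irrefl _ hw
    have hux : ((x + 1 : Fin n) - x).val = 1 := by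
      have : (x + 1 : Fin n) - x = 1 := by ring
      rw [this, hone]
    set t : ℕ := (w - x).val with ht
    have htn : t ≤ n - 1 := by have := (w - x).2; omega
    -- w = x iff t = 0
    by_cases ht0 : t = 0
    · left
      have : w - x = 0 := Fin.ext (by rw [Fin.val_zero]; exact ht0)
      have := sub_eq_zero.mp this
      exact this
    have ht1 : t ≠ 1 := by
      intro h1
      apply hwx
      have : w - x = (x + 1 : Fin n) - x := Fin.ext (by rw [hux]; omega)
      have := sub_left_injective this
      exact this
    by_cases ht2 : t = 2
    · right
      have h2 : ((x + 2 : Fin n) - x).val = 2 := by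
        have e1 : (x + 2 : Fin n) - x = 2 := by ring
        rw [e1]
        show ((2 : ℕ) : Fin n).val = 2
        rw [Fin.val_natCast, Nat.mod_eq_of_lt (by omega)]
      have : w - x = (x + 2 : Fin n) - x := Fin.ext (by rw [h2]; omega)
      exact sub_left_injective this
    -- now t ≥ 3
    exfalso
    have ht3 : 3 ≤ t := by omega
    by_cases htg : t ≤ g
    · -- edge (x+1, w) is shorter, contradicting minimality
      have hwu : (w - (x + 1)).val = t - 1 := by
        have e1 : w - (x + 1) = (w - x) - ((x + 1) - x) := by ring
        rw [e1, fin_sub_val_of_le _ _ (by rw [hux]; omega), hux]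
      have := hmin ((x + 1, w)) (by
        simp only [Finset.mem_filter, Finset.mem_univ, true_and]
        exact ⟨hw, by rw [hwu]; omega⟩)
      simp only at this
      rw [hwu] at this
      omega
    · -- w strictly on the other side of (x, y): crossing
      push_neg at htg
      have hcross : Cross n s(x, y) s(x + 1, w) := by
        refine ⟨x, y, x + 1, w, rfl, rfl, ⟨by rw [hux]; omega, by rw [hux]; omega⟩, ?_, ?_⟩
        · -- 0 < (w - y).val
          have e1 : w - y = (w - x) - (y - x) := by ring
          rw [e1, fin_sub_val_of_le (w - x) (y - x) (by omega)]
          omega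
        · -- (w - y).val < (x - y).val
          have e1 : w - y = (w - x) - (y - x) := by ring
          have e2 : x - y = (0 : Fin n) - (y - x) := by ring
          have hyval : (0 : Fin n).val < (y - x).val := by
            simp only [Fin.val_zero]
            omega
          rw [e1, e2, fin_sub_val_of_le (w - x) (y - x) (by omega),
            fin_sub_val_of_lt (0 : Fin n) (y - x) hyval]
          simp only [Fin.val_zero]
          omega
      exact hnc _ (G.mem_edgeSet.mpr hadj) _ (G.mem_edgeSet.mpr hw) hcross
  · push_neg at hE
    refine ⟨0, 0, 0, ?_⟩
    intro w hw
    exfalso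
    have hne : w ≠ (0 : Fin n) := fun h => by subst h; exact G.loopless.irrefl _ hw
    have h2 : (w - 0).val + ((0 : Fin n) - w).val = n := by
      have hw2 := w.2
      have hwpos : 0 < w.val := by
        rcases Nat.eq_zero_or_pos w.val with h | h
        · exact absurd (Fin.ext (by simpa using h)) hne
        · exact h
      rw [sub_zero, zero_sub]
      have hnw : ((-w : Fin n)).val = n - w.val := by
        rw [Fin.neg_def]
        show (n - w.val) % n = n - w.val
        rw [Nat.mod_eq_of_lt (by omega)]
      rw [hnw]; omega
    have hA : (w - 0).val < 2 := hE (0, w) hw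
    have hB : ((0 : Fin n) - w).val < 2 := hE (w, 0) (G.adj_symm hw)
    omega

theorem stmt_14 (n : ℕ) (G : SimpleGraph (Fin n)) (hG : IsMOP n G)
    (R : Set (Fin n)) (hR : Even R.ncard) :
    ∃ H : SimpleGraph (Fin n),
      (∀ e ∈ H.edgeSet, e ∉ G.edgeSet) ∧
      (∀ e ∈ H.edgeSet, ∀ f ∈ H.edgeSet, ¬ Cross n e f) ∧
      {v : Fin n | ¬ (v ∈ R ↔ Odd ((H.neighborSet v).ncard))}.ncard ≤ 2 := by
  classical
  obtain ⟨hn3, -, -, hnc, -⟩ := hG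
  obtain ⟨c, a, b, hc⟩ := exists_two_nbrs n hn3 G hnc
  set L : Set (Fin n) := {x | x ∈ R ∧ x ≠ c ∧ ¬ G.Adj c x} with hL
  set B : Set (Fin n) := {x | x ∈ R ∧ x ≠ c ∧ G.Adj c x} with hB
  set H : SimpleGraph (Fin n) := SimpleGraph.fromRel (fun u v => u = c ∧ v ∈ L) with hH
  have hcL : c ∉ L := fun h => h.2.1 rfl
  -- membership in H's edges always involves c
  have hadj : ∀ u v, H.Adj u v ↔ (u = c ∧ v ∈ L) ∨ (v = c ∧ u ∈ L) := by
    intro u v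
    rw [hH, SimpleGraph.fromRel_adj]
    constructor
    · rintro ⟨hne, h | h⟩
      · exact Or.inl h
      · exact Or.inr h
    · rintro (⟨rfl, hv⟩ | ⟨rfl, hu⟩)
      · exact ⟨fun h => hcL (h ▸ hv), Or.inl ⟨rfl, hv⟩⟩
      · exact ⟨fun h => hcL (h ▸ hu), Or.inr ⟨rfl, hu⟩⟩
  refine ⟨H, ?_, ?_, ?_⟩
  · -- edge-disjoint from G
    intro e
    induction e with
    | _ u v =>
      intro he hg
      rw [SimpleGraph.mem_edgeSet] at he hg
      rcases (hadj u v).mp he with ⟨rfl, hv⟩ | ⟨rfl, hu⟩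
      · exact hv.2.2 hg
      · exact hu.2.2 (G.adj_symm hg)
  · -- pairwise non-crossing: all edges contain c
    have hmem : ∀ e ∈ H.edgeSet, c ∈ e := by
      intro e
      induction e with
      | _ u v =>
        intro he
        rw [SimpleGraph.mem_edgeSet] at he
        rcases (hadj u v).mp he with ⟨rfl, _⟩ | ⟨rfl, _⟩
        · exact Sym2.mem_mk_left _ _
        · exact Sym2.mem_mk_right _ _
    intro e he f hf
    exact not_cross_of_mem c e f (hmem e he) (hmem f hf)
  · -- at most two parity failures
    -- degrees
    have hNc : H.neighborSet c = L := by
      ext v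
      rw [SimpleGraph.mem_neighborSet, hadj]
      constructor
      · rintro (⟨-, hv⟩ | ⟨rfl, hv⟩)
        · exact hv
        · exact absurd hv hcL
      · intro hv
        exact Or.inl ⟨rfl, hv⟩
    have hNL : ∀ v ∈ L, H.neighborSet v = {c} := by
      intro v hv
      ext u
      rw [SimpleGraph.mem_neighborSet, hadj, Set.mem_singleton_iff]
      constructor
      · rintro (⟨rfl, -⟩ | ⟨rfl, -⟩)
        · exact absurd hv hcL
        · rfl
      · rintro rfl
        exact Or.inr ⟨rfl, hv⟩
    have hN0 : ∀ v, v ≠ c → v ∉ L → H.neighborSet v = ∅ := by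
      intro v hvc hvL
      ext u
      rw [SimpleGraph.mem_neighborSet, hadj]
      simp only [Set.mem_empty_iff_false, iff_false]
      rintro (⟨rfl, -⟩ | ⟨-, hv⟩)
      · exact hvc rfl
      · exact hvL hv
    -- the failure set
    set F : Set (Fin n) := {v : Fin n | ¬ (v ∈ R ↔ Odd ((H.neighborSet v).ncard))} with hF
    have hFsub : F ⊆ insert c B := by
      intro v hv
      by_cases hvc : v = c
      · exact hvc ▸ Set.mem_insert _ _
      by_cases hvL : v ∈ L
      · exfalso
        apply hv
        rw [hNL v hvL]
        simp only [Set.ncard_singleton]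
        exact iff_of_true hvL.1 odd_one
      · right
        rw [hF, Set.mem_setOf_eq, hN0 v hvc hvL] at hv
        simp only [Set.ncard_empty, Nat.odd_iff, Nat.zero_mod] at hv
        have hvR : v ∈ R := by
          by_contra hvR
          exact hv (iff_of_false hvR (by omega))
        have hGadj : G.Adj c v := by
          by_contra hg
          exact hvL ⟨hvR, hvc, hg⟩
        exact ⟨hvR, hvc, hGadj⟩
    have hBsub : B ⊆ {a, b} := by
      intro v hv
      rcases hc v hv.2.2 with rfl | rfl
      · exact Set.mem_insert _ _
      · exact Set.mem_insert_of_mem _ rfl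
    have hBcard : B.ncard ≤ 2 := by
      calc B.ncard ≤ ({a, b} : Set (Fin n)).ncard :=
            Set.ncard_le_ncard hBsub (Set.toFinite _)
        _ ≤ 2 := by
            calc (insert a {b} : Set (Fin n)).ncard ≤ ({b} : Set (Fin n)).ncard + 1 :=
                  Set.ncard_insert_le _ _
              _ ≤ 2 := by rw [Set.ncard_singleton]
    -- cardinality decomposition of R
    have hdisj : Disjoint L B := by
      rw [Set.disjoint_left]
      rintro x ⟨-, -, hx⟩ ⟨-, -, hx'⟩
      exact hx hx'
    have hLB : R \ {c} = L ∪ B := by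
      ext x
      simp only [Set.mem_diff, Set.mem_singleton_iff, Set.mem_union, hL, hB, Set.mem_setOf_eq]
      constructor
      · rintro ⟨hxR, hxc⟩
        by_cases hg : G.Adj c x
        · exact Or.inr ⟨hxR, hxc, hg⟩
        · exact Or.inl ⟨hxR, hxc, hg⟩
      · rintro (⟨h1, h2, -⟩ | ⟨h1, h2, -⟩) <;> exact ⟨h1, h2⟩
    have hRcard : R.ncard = L.ncard + B.ncard + (R ∩ {c}).ncard := by
      have h1 : R = (R \ {c}) ∪ (R ∩ {c}) := by
        ext x
        simp only [Set.mem_union, Set.mem_diff, Set.mem_inter_iff, Set.mem_singleton_iff]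
        tauto
      have h2 : Disjoint (R \ {c}) (R ∩ {c}) := by
        rw [Set.disjoint_left]
        rintro x ⟨-, hx⟩ ⟨-, hx'⟩
        exact hx hx'
      calc R.ncard = ((R \ {c}) ∪ (R ∩ {c})).ncard := by rw [← h1]
        _ = (R \ {c}).ncard + (R ∩ {c}).ncard :=
            Set.ncard_union_eq h2 (Set.toFinite _) (Set.toFinite _)
        _ = (L ∪ B).ncard + (R ∩ {c}).ncard := by rw [hLB]
        _ = L.ncard + B.ncard + (R ∩ {c}).ncard := by
            rw [Set.ncard_union_eq hdisj (Set.toFinite _) (Set.toFinite _)]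
    -- conclude
    by_cases hB1 : B.ncard ≤ 1
    · calc F.ncard ≤ (insert c B).ncard := Set.ncard_le_ncard hFsub (Set.toFinite _)
        _ ≤ B.ncard + 1 := Set.ncard_insert_le _ _
        _ ≤ 2 := by omega
    · -- B.ncard = 2; show c is not a failure
      have hB2 : B.ncard = 2 := by omega
      have hcF : c ∉ F := by
        rw [hF, Set.mem_setOf_eq, not_not, hNc]
        obtain ⟨k, hk⟩ := hR
        by_cases hcR : c ∈ R
        · have hRc : (R ∩ {c}).ncard = 1 := by
            have h1 : R ∩ {c} = {c} :=
              Set.inter_eq_right.mpr (Set.singleton_subset_iff.mpr hcR)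
            rw [h1, Set.ncard_singleton]
          rw [hRc, hB2] at hRcard
          refine iff_of_true hcR ?_
          rw [Nat.odd_iff]
          omega
        · have hRc : (R ∩ {c}).ncard = 0 := by
            have h1 : R ∩ {c} = ∅ := by
              ext x
              simp only [Set.mem_inter_iff, Set.mem_singleton_iff,
                Set.mem_empty_iff_false, iff_false, not_and]
              rintro hx rfl; exact hcR hx
            rw [h1, Set.ncard_empty]
          rw [hRc, hB2] at hRcard
          refine iff_of_false hcR ?_
          rw [Nat.odd_iff]
          omega
      have hFsub' : F ⊆ B := by
        intro v hv
        rcases hFsub hv with rfl | h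
        · exact absurd hv hcF
        · exact h
      calc F.ncard ≤ B.ncard := Set.ncard_le_ncard hFsub' (Set.toFinite _)
        _ ≤ 2 := hBcard
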